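/- Let (q_k)_{k≥1} be a sequence of real numbers in [0,1], and let m ∈ (0,1), C ≥ 1 with Cm < 1, and o ≥ 0 an integer. Suppose q₁ = m, and for every k ≥ 1, q_{k+1} ≤ q_k + C·m·(1 − q_{k−o}) where we interpret q_j := 0 for j ≤ 0, and suppose additionally q_{k+1} ≤ q_k + m for all k ≥ 1. Then for every k ≥ 1, q_k ≤ (1 − Cm)^{k−1}·m + (1 + o·m)·(1 − (1 − Cm)^{k−1}). -/
import Mathlib


open Set

private lemma bern1 (m : ℝ) (h0 : 0 ≤ m) (h1 : m ≤ 1) :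
    ∀ n : ℕ, (1 + (n : ℝ) * m) * (1 - m) ^ n ≤ 1 := by
  intro n
  induction n with
  | zero => simp
  | succ n ih =>
    have hp : (0:ℝ) ≤ (1-m)^n := pow_nonneg (by linarith) n
    have h2 : (1 + ((n:ℝ)+1) * m) * (1 - m) ≤ 1 + (n:ℝ) * m := by
      nlinarith [Nat.cast_nonneg (α := ℝ) n, sq_nonneg m]
    calc (1 + ((n+1 : ℕ) : ℝ) * m) * (1 - m) ^ (n+1)
        = ((1 + ((n:ℝ)+1) * m) * (1 - m)) * (1-m)^n := by push_cast; ring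
      _ ≤ (1 + (n:ℝ) * m) * (1-m)^n := mul_le_mul_of_nonneg_right h2 hp
      _ ≤ 1 := ih

private lemma bern2 (m : ℝ) (h0 : 0 ≤ m) (h1 : m ≤ 1) :
    ∀ n : ℕ, (1 - m) ^ n ≤ 1 - (n : ℝ) * m + (n:ℝ) * ((n:ℝ)-1)/2 * m^2 := by
  intro n
  induction n with
  | zero => simp
  | succ n ih =>
    have hn : (0:ℝ) ≤ (n:ℝ) := Nat.cast_nonneg n
    have h2 : (1-m)^(n+1) ≤ (1-m) * (1 - (n : ℝ) * m + (n:ℝ) * ((n:ℝ)-1)/2 * m^2) := by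
      rw [pow_succ, mul_comm]
      exact mul_le_mul_of_nonneg_left ih (by linarith)
    have h3 : (1-m) * (1 - (n : ℝ) * m + (n:ℝ) * ((n:ℝ)-1)/2 * m^2)
        ≤ 1 - ((n:ℝ)+1) * m + ((n:ℝ)+1) * (((n:ℝ)+1)-1)/2 * m^2 := by
      have hnn : (0:ℝ) ≤ (n:ℝ) * ((n:ℝ)-1) := by
        rcases n with _|n
        · simp
        · push_cast; nlinarith [Nat.cast_nonneg (α := ℝ) n]
      nlinarith [mul_nonneg hnn (mul_nonneg (mul_nonneg h0 h0) h0)]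
    calc (1-m)^(n+1) ≤ _ := h2
      _ ≤ 1 - ((n:ℝ)+1) * m + ((n:ℝ)+1) * (((n:ℝ)+1)-1)/2 * m^2 := h3
      _ = 1 - ((n+1:ℕ):ℝ) * m + ((n+1:ℕ):ℝ) * (((n+1:ℕ):ℝ)-1)/2 * m^2 := by push_cast; ring

private lemma min_le_target (m : ℝ) (hm0 : 0 < m) (hm1 : m < 1) (n : ℕ) (hn : 1 ≤ n)
    (x : ℝ) (hx1 : x ≤ 1) (hx2 : x ≤ ((n:ℝ)+1) * m) :
    x ≤ m + (1 - (1-m)^n) * (1 + ((n:ℝ)-1) * m) := by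
  have hn1 : (1:ℝ) ≤ (n:ℝ) := by exact_mod_cast hn
  have hu0 : (0:ℝ) ≤ (1-m)^n := pow_nonneg (by linarith) n
  rcases le_or_gt 1 ((n:ℝ)*m) with h | h
  · -- use x ≤ 1
    have A := bern1 m hm0.le hm1.le n
    have key : 1 - m ≤ (1 - (1-m)^n) * (1 + ((n:ℝ)-1) * m) := by
      nlinarith [mul_nonneg hu0 (mul_nonneg (by linarith : (0:ℝ) ≤ (n:ℝ)*m - 1) hm0.le),
        sq_nonneg ((n:ℝ)*m), mul_nonneg hu0 hm0.le]
    linarith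
  · -- use x ≤ (n+1) m
    have B := bern2 m hm0.le hm1.le n
    have ht : ((n:ℝ)-1) * m < 1 := by nlinarith
    have ht0 : 0 ≤ ((n:ℝ)-1) * m := mul_nonneg (by linarith) hm0.le
    have key : (n:ℝ) * m ≤ (1 - (1-m)^n) * (1 + ((n:ℝ)-1) * m) := by
      nlinarith [mul_nonneg (mul_nonneg (by linarith : (0:ℝ) ≤ (n:ℝ)*m) ht0) (by linarith : (0:ℝ) ≤ 1 - ((n:ℝ)-1)*m),
        mul_nonneg hm0.le hm0.le]
    linarith

theorem recursive_entry_estimate (q : ℕ → ℝ) (m C : ℝ) (o : ℕ)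
    (hq01 : ∀ k, q k ∈ Set.Icc (0 : ℝ) 1)
    (hm : m ∈ Set.Ioo (0 : ℝ) 1) (hC : 1 ≤ C) (hCm : C * m < 1)
    (hq1 : q 1 = m)
    (hrec : ∀ k, 1 ≤ k →
      q (k + 1) ≤ q k + C * m * (1 - (if o < k then q (k - o) else 0)))
    (hstep : ∀ k, 1 ≤ k → q (k + 1) ≤ q k + m) :
    ∀ k, 1 ≤ k →
      q k ≤ (1 - C * m) ^ (k - 1) * m +
        (1 + (o : ℝ) * m) * (1 - (1 - C * m) ^ (k - 1)) := by
  obtain ⟨hm0, hm1⟩ := hm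
  have hCm0 : 0 < C * m := mul_pos (by linarith) hm0
  have ha0 : 0 ≤ 1 - C * m := by linarith
  have hmCm : m ≤ C * m := by nlinarith
  -- chain lemma
  have hchain : ∀ j, 1 ≤ j → ∀ i : ℕ, q (j + i) ≤ q j + (i:ℝ) * m := by
    intro j hj i
    induction i with
    | zero => simp
    | succ i ih =>
      have := hstep (j + i) (by omega)
      push_cast
      calc q (j + (i+1)) = q ((j+i) + 1) := by ring_nf
        _ ≤ q (j+i) + m := this
        _ ≤ q j + (i:ℝ)*m + m := by linarith
        _ = q j + ((i:ℝ)+1)*m := by ring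
  have key : ∀ n : ℕ, q (n+1) ≤ (1 - C*m)^n * m + (1 + (o:ℝ)*m) * (1 - (1-C*m)^n) := by
    intro n
    induction n with
    | zero => simp [hq1]
    | succ n ih =>
      rcases lt_or_ge o (n+1) with ho | ho
      · -- main recursion case
        have hr := hrec (n+1) (by omega)
        rw [if_pos ho] at hr
        have hc := hchain (n+1-o) (by omega) o
        rw [show n+1-o+o = n+1 by omega] at hc
        have h2 : q (n+2) ≤ q (n+1) + C*m*(1 - q (n+1) + (o:ℝ)*m) := by
          have : C*m*(1 - q (n+1-o)) ≤ C*m*(1 - q (n+1) + (o:ℝ)*m) :=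
            mul_le_mul_of_nonneg_left (by linarith) hCm0.le
          calc q (n+2) = q (n+1+1) := by ring_nf
            _ ≤ q (n+1) + C*m*(1 - q (n+1-o)) := hr
            _ ≤ _ := by linarith
        have h3 : (1-C*m) * q (n+1) ≤ (1-C*m) * ((1 - C*m)^n * m + (1 + (o:ℝ)*m) * (1 - (1-C*m)^n)) :=
          mul_le_mul_of_nonneg_left ih ha0
        calc q (n+2) ≤ q (n+1) + C*m*(1 - q (n+1) + (o:ℝ)*m) := h2
          _ = (1-C*m) * q (n+1) + C*m*(1+(o:ℝ)*m) := by ring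
          _ ≤ (1-C*m) * ((1 - C*m)^n * m + (1 + (o:ℝ)*m) * (1 - (1-C*m)^n)) + C*m*(1+(o:ℝ)*m) := by linarith
          _ = (1 - C*m)^(n+1) * m + (1 + (o:ℝ)*m) * (1 - (1-C*m)^(n+1)) := by rw [pow_succ]; ring
      · -- small-index case: k+1 ≤ o
        have hx1 : q (n+2) ≤ 1 := (hq01 (n+2)).2
        have hx2 : q (n+2) ≤ (((n+1:ℕ):ℝ)+1) * m := by
          have hc := hchain 1 le_rfl (n+1)
          rw [show 1+(n+1) = n+2 by omega, hq1] at hc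
          push_cast at hc ⊢
          linarith
        have h4 := min_le_target m hm0 hm1 (n+1) (by omega) _ hx1 hx2
        have hpow : (1-C*m)^(n+1) ≤ (1-m)^(n+1) :=
          pow_le_pow_left₀ ha0 (by linarith) (n+1)
        have hpow1 : (1-m)^(n+1) ≤ 1 := pow_le_one₀ (by linarith) (by linarith)
        have hfac : (1:ℝ) + (((n+1:ℕ):ℝ)-1) * m ≤ 1 + ((o:ℝ)-1) * m := by
          have : ((n+1:ℕ):ℝ) ≤ (o:ℝ) := by exact_mod_cast ho
          nlinarith
        have hfac0 : (0:ℝ) ≤ 1 + (((n+1:ℕ):ℝ)-1) * m := by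
          push_cast; nlinarith [Nat.cast_nonneg (α := ℝ) n]
        have h5 : (1 - (1-m)^(n+1)) * (1 + (((n+1:ℕ):ℝ)-1) * m)
            ≤ (1 - (1-C*m)^(n+1)) * (1 + ((o:ℝ)-1) * m) := by
          apply mul_le_mul (by linarith) hfac hfac0 (by linarith)
        calc q (n+2) ≤ m + (1 - (1-m)^(n+1)) * (1 + (((n+1:ℕ):ℝ)-1) * m) := h4
          _ ≤ m + (1 - (1-C*m)^(n+1)) * (1 + ((o:ℝ)-1) * m) := by linarith
          _ = (1 - C*m)^(n+1) * m + (1 + (o:ℝ)*m) * (1 - (1-C*m)^(n+1)) := by ring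
  intro k hk
  obtain ⟨n, rfl⟩ : ∃ n, k = n + 1 := ⟨k-1, (Nat.succ_pred_eq_of_pos hk).symm⟩
  simpa using key n
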